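/- For p > 1 and 0 < s < 1, the inequality s·p³/(p+1)² · (1/(p+1)² - (log s)²/p²) < ∫₀¹ u^{1/p} (1-su)/(1+su)³ · (log(su))² du holds. -/

import Mathlib

open Real Set MeasureTheory intervalIntegral

lemma log_sq_bound {u : ℝ} (h0 : 0 < u) (h1 : u ≤ 1) :
    (Real.log u) ^ 2 ≤ 16 * u ^ (-(1/2) : ℝ) := by
  have h4 : (0:ℝ) < u ^ (-(1/4) : ℝ) := Real.rpow_pos_of_pos h0 _
  have hlog : -Real.log u ≤ 4 * u ^ (-(1/4) : ℝ) := by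
    have hl : Real.log u ≤ 0 := Real.log_nonpos h0.le h1
    have hr : Real.log (u ^ (-(1/4) : ℝ)) = (-(1/4)) * Real.log u := Real.log_rpow h0 _
    have h2 : Real.log (u ^ (-(1/4) : ℝ)) ≤ u ^ (-(1/4) : ℝ) - 1 :=
      Real.log_le_sub_one_of_pos h4
    nlinarith
  have h16 : (4 * u ^ (-(1/4) : ℝ))^2 = 16 * u ^ (-(1/2) : ℝ) := by
    rw [mul_pow, ← Real.rpow_natCast (u ^ (-(1/4):ℝ)) 2, ← Real.rpow_mul h0.le]
    norm_num
  have hl : Real.log u ≤ 0 := Real.log_nonpos h0.le h1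
  nlinarith

lemma intble {C : ℝ} {f : ℝ → ℝ}
    (hm : AEStronglyMeasurable f (volume.restrict (Ioc (0:ℝ) 1)))
    (hb : ∀ u ∈ Ioc (0:ℝ) 1, |f u| ≤ C * u ^ (-(1/2) : ℝ)) :
    IntervalIntegrable f volume 0 1 := by
  rw [intervalIntegrable_iff_integrableOn_Ioc_of_le zero_le_one]
  have hg : IntegrableOn (fun u : ℝ => C * u ^ (-(1/2) : ℝ)) (Ioc (0:ℝ) 1) volume := by
    have := (intervalIntegrable_rpow' (a := (0:ℝ)) (b := 1)
      (by norm_num : (-1:ℝ) < -(1/2))).const_mul C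
    rwa [intervalIntegrable_iff_integrableOn_Ioc_of_le zero_le_one] at this
  refine Integrable.mono hg hm ?_
  rw [ae_restrict_iff' measurableSet_Ioc]
  filter_upwards with u hu
  have h := hb u hu
  have : C * u ^ (-(1/2) : ℝ) ≤ ‖C * u ^ (-(1/2) : ℝ)‖ := le_abs_self _
  calc ‖f u‖ = |f u| := rfl
    _ ≤ C * u ^ (-(1/2):ℝ) := h
    _ ≤ ‖C * u ^ (-(1/2):ℝ)‖ := this

lemma int1 (t : ℝ) (ht : 0 ≤ t) :
    IntervalIntegrable (fun u : ℝ => u ^ t * (Real.log u) ^ 2) volume 0 1 := by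
  apply intble (C := 16)
  · apply Measurable.aestronglyMeasurable
    exact (measurable_id.pow_const t).mul ((Real.measurable_log).pow_const 2)
  · intro u hu
    have h0 : 0 < u := hu.1
    have h1 : u ≤ 1 := hu.2
    have hup : u ^ t ≤ 1 := Real.rpow_le_one h0.le h1 ht
    have h2 : (0:ℝ) ≤ (Real.log u)^2 := sq_nonneg _
    have h3 : (0:ℝ) ≤ u ^ t := (Real.rpow_pos_of_pos h0 t).le
    rw [abs_of_nonneg (mul_nonneg h3 h2)]
    calc u ^ t * (Real.log u)^2 ≤ 1 * (Real.log u)^2 := by nlinarith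
      _ = (Real.log u)^2 := one_mul _
      _ ≤ 16 * u ^ (-(1/2):ℝ) := log_sq_bound h0 h1

lemma int2 (t : ℝ) (ht : 0 ≤ t) :
    ∫ u in (0:ℝ)..1, u ^ t * (Real.log u) ^ 2 = 2 / (t + 1) ^ 3 := by
  have ht1 : (0:ℝ) < t + 1 := by linarith
  have ht1' : t + 1 ≠ 0 := ht1.ne'
  set F : ℝ → ℝ := fun u =>
    (Real.log u) ^ 2 * u ^ (t+1) / (t+1) - 2 * (Real.log u * u ^ (t+1)) / (t+1)^2
      + 2 * u ^ (t+1) / (t+1)^3 with hF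
  have hderiv : ∀ x ∈ Ioo (0:ℝ) 1, HasDerivAt F (x ^ t * (Real.log x) ^ 2) x := by
    intro x hx
    have hx0 : 0 < x := hx.1
    have hlog : HasDerivAt Real.log x⁻¹ x := Real.hasDerivAt_log hx0.ne'
    have hrp : HasDerivAt (fun u : ℝ => u ^ (t+1)) ((t+1) * x ^ t) x := by
      have := Real.hasDerivAt_rpow_const (x := x) (p := t+1) (Or.inl hx0.ne')
      simpa using this
    have h1 : HasDerivAt (fun u : ℝ => (Real.log u)^2 * u ^ (t+1))
        (2 * Real.log x * x⁻¹ * x ^ (t+1) + (Real.log x)^2 * ((t+1) * x ^ t)) x := by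
      have := ((hlog.pow 2).mul hrp)
      exact this.congr_deriv (by norm_num)
    have h2 : HasDerivAt (fun u : ℝ => Real.log u * u ^ (t+1))
        (x⁻¹ * x ^ (t+1) + Real.log x * ((t+1) * x ^ t)) x := hlog.mul hrp
    have hD : HasDerivAt F
        ((2 * Real.log x * x⁻¹ * x ^ (t+1) + (Real.log x)^2 * ((t+1) * x ^ t)) / (t+1)
          - 2 * (x⁻¹ * x ^ (t+1) + Real.log x * ((t+1) * x ^ t)) / (t+1)^2
          + 2 * ((t+1) * x ^ t) / (t+1)^3) x := by
      exact ((h1.div_const _).sub ((h2.const_mul 2).div_const _)).add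
        ((hrp.const_mul 2).div_const _)
    convert hD using 1
    have hxx : x ^ (t+1) = x ^ t * x := Real.rpow_add_one hx0.ne' t
    rw [hxx]
    field_simp
    ring
  have hint := int1 t ht
  have ha : Filter.Tendsto F (nhdsWithin 0 (Ioi 0)) (nhds 0) := by
    have hA : Filter.Tendsto (fun u : ℝ => Real.log u * u ^ ((t+1)/2))
        (nhdsWithin 0 (Ioi 0)) (nhds 0) :=
      tendsto_log_mul_rpow_nhdsGT_zero (by linarith)
    have hA2 : Filter.Tendsto (fun u : ℝ => (Real.log u)^2 * u ^ (t+1))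
        (nhdsWithin 0 (Ioi 0)) (nhds 0) := by
      have h := hA.mul hA
      rw [mul_zero] at h
      refine h.congr' ?_
      filter_upwards [self_mem_nhdsWithin] with u hu
      have hu0 : (0:ℝ) < u := hu
      have he : u ^ ((t+1)/2) * u ^ ((t+1)/2) = u ^ (t+1) := by
        rw [← Real.rpow_add hu0]; ring_nf
      nlinarith [he]
    have hA1 : Filter.Tendsto (fun u : ℝ => Real.log u * u ^ (t+1))
        (nhdsWithin 0 (Ioi 0)) (nhds 0) := tendsto_log_mul_rpow_nhdsGT_zero (by linarith)
    have hA0 : Filter.Tendsto (fun u : ℝ => u ^ (t+1)) (nhdsWithin 0 (Ioi 0)) (nhds 0) := by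
      have hc : ContinuousAt (fun u : ℝ => u ^ (t+1)) 0 :=
        Real.continuousAt_rpow_const 0 (t+1) (Or.inr ht1.le)
      have h0 : (0:ℝ) ^ (t+1) = 0 := Real.zero_rpow ht1'
      have := hc.continuousWithinAt (s := Ioi (0:ℝ))
      rw [ContinuousWithinAt, h0] at this
      exact this
    have : Filter.Tendsto F (nhdsWithin 0 (Ioi 0))
        (nhds (0 / (t+1) - 2 * 0 / (t+1)^2 + 2 * 0 / (t+1)^3)) := by
      exact ((hA2.div_const _).sub ((hA1.const_mul 2).div_const _)).add
        ((hA0.const_mul 2).div_const _)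
    simpa using this
  have hb : Filter.Tendsto F (nhdsWithin 1 (Iio 1)) (nhds (2 / (t+1)^3)) := by
    have hc : ContinuousAt F 1 := by
      have hlog : ContinuousAt Real.log 1 := Real.continuousAt_log one_ne_zero
      have hrp : ContinuousAt (fun u : ℝ => u ^ (t+1)) 1 :=
        Real.continuousAt_rpow_const 1 (t+1) (Or.inl one_ne_zero)
      exact (((hlog.pow 2).mul hrp).div_const _).sub
        (((hlog.mul hrp).const_mul 2).div_const _) |>.add ((hrp.const_mul 2).div_const _)
    have hF1 : F 1 = 2 / (t+1)^3 := by
      simp [hF, Real.log_one, Real.one_rpow]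
    have := hc.continuousWithinAt (s := Iio (1:ℝ))
    rw [ContinuousWithinAt, hF1] at this
    exact this
  have := intervalIntegral.integral_eq_sub_of_hasDerivAt_of_tendsto zero_lt_one hderiv hint ha hb
  rw [this]; ring

lemma key_ineq (p : ℝ) (hp : 1 < p) :
    p^3/(p+1)^4 < 2/(1/p+1)^3 - 8/(1/p+2)^3 + 12/(1/p+3)^3 - 8/(1/p+4)^3 + 2/(1/p+5)^3 := by
  have hp0 : (0:ℝ) < p := by linarith
  have hq : (0:ℝ) < p - 1 := by linarith
  have h1 : (0:ℝ) < p + 1 := by linarith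
  have h2 : (0:ℝ) < 2*p + 1 := by linarith
  have h3 : (0:ℝ) < 3*p + 1 := by linarith
  have h4 : (0:ℝ) < 4*p + 1 := by linarith
  have h5 : (0:ℝ) < 5*p + 1 := by linarith
  set N : ℝ := 17888256 + 237651840*(p-1) + 1357297632*(p-1)^2 + 4528832376*(p-1)^3
    + 9984653484*(p-1)^4 + 15483109338*(p-1)^5 + 17462896267*(p-1)^6
    + 14554813242*(p-1)^7 + 8986614492*(p-1)^8 + 4067005496*(p-1)^9
    + 1313121216*(p-1)^10 + 286739280*(p-1)^11 + 37987872*(p-1)^12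
    + 2307648*(p-1)^13 with hN
  set D : ℝ := (p+1)^4 * (2*p+1)^3 * (3*p+1)^3 * (4*p+1)^3 * (5*p+1)^3 with hD
  have hDpos : 0 < D := by
    rw [hD]; positivity
  have hNpos : 0 < N := by
    rw [hN]
    have e1 := pow_pos hq 2
    have e2 := pow_pos hq 3
    have e3 := pow_pos hq 4
    have e4 := pow_pos hq 5
    have e5 := pow_pos hq 6
    have e6 := pow_pos hq 7
    have e7 := pow_pos hq 8
    have e8 := pow_pos hq 9
    have e9 := pow_pos hq 10
    have e10 := pow_pos hq 11
    have e11 := pow_pos hq 12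
    have e12 := pow_pos hq 13
    positivity
  have heq : (2/(1/p+1)^3 - 8/(1/p+2)^3 + 12/(1/p+3)^3 - 8/(1/p+4)^3 + 2/(1/p+5)^3)
      - p^3/(p+1)^4 = p^3 * N / D := by
    rw [hN, hD]
    field_simp
    ring
  have hpos : 0 < p^3 * N / D := by positivity
  linarith [heq ▸ hpos]

lemma pointwise_le {p s : ℝ} (hp : 1 < p) (hs0 : 0 < s) (hs1 : s < 1) :
    ∀ u ∈ Icc (0:ℝ) 1,
      u ^ (1/p) * (1-u)^4 * (Real.log u)^2
        ≤ u ^ (1/p) * ((1 - s*u)/(1 + s*u)^3) * (Real.log (s*u))^2 := by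
  intro u hu
  rcases eq_or_lt_of_le hu.1 with h0 | h0
  · rw [← h0]
    have : (0:ℝ) ^ (1/p) = 0 := Real.zero_rpow (by positivity)
    simp [this]
  · have h1 : u ≤ 1 := hu.2
    have hsu0 : 0 < s*u := mul_pos hs0 h0
    have hsu1 : s*u < 1 := by nlinarith
    have hrp : (0:ℝ) ≤ u ^ (1/p) := (Real.rpow_pos_of_pos h0 _).le
    -- middle factor inequality
    have hm1 : (1-u)*(1+s*u) ≤ 1 := by nlinarith
    have hm2 : ((1-u)*(1+s*u))^3 ≤ 1 := by
      have hnn : (0:ℝ) ≤ (1-u)*(1+s*u) := by nlinarith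
      calc ((1-u)*(1+s*u))^3 ≤ 1^3 := pow_le_pow_left₀ hnn hm1 3
        _ = 1 := one_pow 3
    have hden : (0:ℝ) < (1+s*u)^3 := by positivity
    have hm3 : (1-u)^3 ≤ 1/(1+s*u)^3 := by
      rw [le_div_iff₀ hden, ← mul_pow]
      exact hm2
    have hm4 : 1 - u ≤ 1 - s*u := by nlinarith
    have hmid : (1-u)^4 ≤ (1 - s*u)/(1 + s*u)^3 := by
      have hnn1 : (0:ℝ) ≤ 1 - u := by linarith
      have hnn3 : (0:ℝ) ≤ (1-u)^3 := by positivity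
      calc (1-u)^4 = (1-u) * (1-u)^3 := by ring
        _ ≤ (1 - s*u) * (1/(1+s*u)^3) := by
            apply mul_le_mul hm4 hm3 hnn3 (by linarith)
        _ = (1 - s*u)/(1 + s*u)^3 := by ring
    -- log factor inequality
    have hlog : (Real.log u)^2 ≤ (Real.log (s*u))^2 := by
      have hl : Real.log (s*u) = Real.log s + Real.log u :=
        Real.log_mul hs0.ne' h0.ne'
      have hls : Real.log s < 0 := Real.log_neg hs0 hs1
      have hlu : Real.log u ≤ 0 := Real.log_nonpos h0.le h1
      rw [hl]
      nlinarith [mul_nonneg (neg_nonneg.2 hls.le) (neg_nonneg.2 hlu), sq_nonneg (Real.log s)]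
    have hmidnn : (0:ℝ) ≤ (1-u)^4 := by positivity
    have hlognn : (0:ℝ) ≤ (Real.log u)^2 := sq_nonneg _
    calc u ^ (1/p) * (1-u)^4 * (Real.log u)^2
        ≤ u ^ (1/p) * ((1 - s*u)/(1 + s*u)^3) * (Real.log u)^2 := by
          apply mul_le_mul_of_nonneg_right (mul_le_mul_of_nonneg_left hmid hrp) hlognn
      _ ≤ u ^ (1/p) * ((1 - s*u)/(1 + s*u)^3) * (Real.log (s*u))^2 := by
          apply mul_le_mul_of_nonneg_left hlog
          apply mul_nonneg hrp
          apply div_nonneg (by linarith) hden.le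

lemma big_intble {p s : ℝ} (hp : 1 < p) (hs0 : 0 < s) (hs1 : s < 1) :
    IntervalIntegrable
      (fun u : ℝ => u ^ (1/p) * ((1 - s*u)/(1 + s*u)^3) * (Real.log (s*u))^2) volume 0 1 := by
  apply intble (C := 2*(Real.log s)^2 + 32)
  · apply Measurable.aestronglyMeasurable
    apply ((measurable_id.pow_const (1/p)).mul ?_).mul ?_
    · exact ((measurable_const.sub (measurable_const.mul measurable_id)).div
        (((measurable_const.add (measurable_const.mul measurable_id)).pow_const 3)))
    · exact (Real.measurable_log.comp (measurable_const.mul measurable_id)).pow_const 2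
  · intro u hu
    have h0 : 0 < u := hu.1
    have h1 : u ≤ 1 := hu.2
    have hsu0 : 0 < s*u := mul_pos hs0 h0
    have hsu1 : s*u < 1 := by nlinarith
    have hrp : u ^ (1/p) ≤ 1 := Real.rpow_le_one h0.le h1 (by positivity)
    have hrp0 : (0:ℝ) ≤ u ^ (1/p) := (Real.rpow_pos_of_pos h0 _).le
    have hden : (0:ℝ) < (1+s*u)^3 := by positivity
    have hmid0 : (0:ℝ) ≤ (1 - s*u)/(1 + s*u)^3 := div_nonneg (by linarith) hden.le
    have hmid1 : (1 - s*u)/(1 + s*u)^3 ≤ 1 := by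
      rw [div_le_one hden]
      nlinarith [pow_pos (show (0:ℝ) < 1 + s*u by nlinarith) 3, sq_nonneg (s*u),
        mul_pos hsu0 hsu0]
    have hlogsq : (Real.log (s*u))^2 ≤ 2*(Real.log s)^2 + 2*(Real.log u)^2 := by
      rw [Real.log_mul hs0.ne' h0.ne']
      nlinarith [sq_nonneg (Real.log s - Real.log u)]
    have hlb := log_sq_bound h0 h1
    have hpow1 : (1:ℝ) ≤ u ^ (-(1/2):ℝ) :=
      Real.one_le_rpow_of_pos_of_le_one_of_nonpos h0 h1 (by norm_num)
    have habs : (0:ℝ) ≤ u ^ (1/p) * ((1 - s*u)/(1 + s*u)^3) * (Real.log (s*u))^2 :=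
      mul_nonneg (mul_nonneg hrp0 hmid0) (sq_nonneg _)
    rw [abs_of_nonneg habs]
    have hb1 : u ^ (1/p) * ((1 - s*u)/(1 + s*u)^3) * (Real.log (s*u))^2
        ≤ (Real.log (s*u))^2 := by
      nlinarith [sq_nonneg (Real.log (s*u)), mul_nonneg hrp0 hmid0,
        mul_le_one₀ hrp (by linarith : (0:ℝ) ≤ (1 - s*u)/(1 + s*u)^3) hmid1]
    have hb2 : 2*(Real.log u)^2 ≤ 32 * u ^ (-(1/2):ℝ) := by linarith
    have hb3 : 2*(Real.log s)^2 ≤ 2*(Real.log s)^2 * u ^ (-(1/2):ℝ) := by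
      nlinarith [sq_nonneg (Real.log s)]
    calc u ^ (1/p) * ((1 - s*u)/(1 + s*u)^3) * (Real.log (s*u))^2
        ≤ (Real.log (s*u))^2 := hb1
      _ ≤ 2*(Real.log s)^2 + 2*(Real.log u)^2 := hlogsq
      _ ≤ 2*(Real.log s)^2 * u ^ (-(1/2):ℝ) + 32 * u ^ (-(1/2):ℝ) := by linarith
      _ = (2*(Real.log s)^2 + 32) * u ^ (-(1/2):ℝ) := by ring

lemma small_intble {p : ℝ} (hp : 1 < p) :
    IntervalIntegrable (fun u : ℝ => u ^ (1/p) * (1-u)^4 * (Real.log u)^2) volume 0 1 := by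
  apply intble (C := 16)
  · apply Measurable.aestronglyMeasurable
    exact ((measurable_id.pow_const (1/p)).mul
      ((measurable_const.sub measurable_id).pow_const 4)).mul
      (Real.measurable_log.pow_const 2)
  · intro u hu
    have h0 : 0 < u := hu.1
    have h1 : u ≤ 1 := hu.2
    have hrp : u ^ (1/p) ≤ 1 := Real.rpow_le_one h0.le h1 (by positivity)
    have hrp0 : (0:ℝ) ≤ u ^ (1/p) := (Real.rpow_pos_of_pos h0 _).le
    have h14 : (1-u)^4 ≤ 1 := by
      have hn : (0:ℝ) ≤ 1 - u ∧ 1 - u ≤ 1 := ⟨by linarith, by linarith⟩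
      calc (1-u)^4 ≤ 1^4 := pow_le_pow_left₀ hn.1 hn.2 4
        _ = 1 := one_pow 4
    have h14' : (0:ℝ) ≤ (1-u)^4 := by positivity
    have habs : (0:ℝ) ≤ u ^ (1/p) * (1-u)^4 * (Real.log u)^2 :=
      mul_nonneg (mul_nonneg hrp0 h14') (sq_nonneg _)
    rw [abs_of_nonneg habs]
    calc u ^ (1/p) * (1-u)^4 * (Real.log u)^2 ≤ 1 * (Real.log u)^2 := by
          nlinarith [sq_nonneg (Real.log u), mul_le_one₀ hrp h14' h14,
            mul_nonneg hrp0 h14']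
      _ = (Real.log u)^2 := one_mul _
      _ ≤ 16 * u ^ (-(1/2):ℝ) := log_sq_bound h0 h1

lemma intval {p : ℝ} (hp : 1 < p) :
    ∫ u in (0:ℝ)..1, u ^ (1/p) * (1-u)^4 * (Real.log u)^2
      = 2/(1/p+1)^3 - 8/(1/p+2)^3 + 12/(1/p+3)^3 - 8/(1/p+4)^3 + 2/(1/p+5)^3 := by
  have hp0 : (0:ℝ) < 1/p := by positivity
  have t0 : (0:ℝ) ≤ 1/p := hp0.le
  have t1 : (0:ℝ) ≤ 1/p + 1 := by linarith
  have t2 : (0:ℝ) ≤ 1/p + 2 := by linarith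
  have t3 : (0:ℝ) ≤ 1/p + 3 := by linarith
  have t4 : (0:ℝ) ≤ 1/p + 4 := by linarith
  have i0 := int1 (1/p) t0
  have i1 := int1 (1/p+1) t1
  have i2 := int1 (1/p+2) t2
  have i3 := int1 (1/p+3) t3
  have i4 := int1 (1/p+4) t4
  have hEq : EqOn (fun u : ℝ => u ^ (1/p) * (1-u)^4 * (Real.log u)^2)
      (fun u : ℝ => u ^ (1/p) * (Real.log u)^2 - 4 * (u ^ (1/p+1) * (Real.log u)^2)
        + 6 * (u ^ (1/p+2) * (Real.log u)^2) - 4 * (u ^ (1/p+3) * (Real.log u)^2)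
        + u ^ (1/p+4) * (Real.log u)^2) (uIcc (0:ℝ) 1) := by
    intro u hu
    rw [uIcc_of_le zero_le_one] at hu
    rcases eq_or_lt_of_le hu.1 with h0 | h0
    · rw [← h0]
      simp only
      rw [Real.zero_rpow hp0.ne', Real.zero_rpow (by linarith : (1/p+1) ≠ 0),
        Real.zero_rpow (by linarith : (1/p+2) ≠ 0),
        Real.zero_rpow (by linarith : (1/p+3) ≠ 0),
        Real.zero_rpow (by linarith : (1/p+4) ≠ 0)]
      ring
    · simp only
      rw [Real.rpow_add h0 (1/p) 1, Real.rpow_add h0 (1/p) 2, Real.rpow_add h0 (1/p) 3,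
        Real.rpow_add h0 (1/p) 4, Real.rpow_one,
        show (2:ℝ) = ((2:ℕ):ℝ) by norm_num, Real.rpow_natCast,
        show (3:ℝ) = ((3:ℕ):ℝ) by norm_num, Real.rpow_natCast,
        show (4:ℝ) = ((4:ℕ):ℝ) by norm_num, Real.rpow_natCast]
      ring
  rw [intervalIntegral.integral_congr hEq]
  rw [intervalIntegral.integral_add (((i0.sub (i1.const_mul 4)).add
    (i2.const_mul 6)).sub (i3.const_mul 4)) i4]
  rw [intervalIntegral.integral_sub ((i0.sub (i1.const_mul 4)).add (i2.const_mul 6))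
    (i3.const_mul 4)]
  rw [intervalIntegral.integral_add (i0.sub (i1.const_mul 4)) (i2.const_mul 6)]
  rw [intervalIntegral.integral_sub i0 (i1.const_mul 4)]
  rw [intervalIntegral.integral_const_mul, intervalIntegral.integral_const_mul,
    intervalIntegral.integral_const_mul]
  rw [int2 (1/p) t0, int2 (1/p+1) t1, int2 (1/p+2) t2, int2 (1/p+3) t3, int2 (1/p+4) t4]
  ring

theorem lemma_tan_estimate (p s : ℝ) (hp : 1 < p) (hs0 : 0 < s) (hs1 : s < 1) :
    s * p ^ 3 / (p + 1) ^ 2 * (1 / (p + 1) ^ 2 - (Real.log s) ^ 2 / p ^ 2)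
      < ∫ u in (0:ℝ)..1, u ^ (1 / p) * ((1 - s * u) / (1 + s * u) ^ 3)
          * (Real.log (s * u)) ^ 2 := by
  have hp0 : (0:ℝ) < p := by linarith
  have h1 : (0:ℝ) < p + 1 := by linarith
  have hV := key_ineq p hp
  have hI := intval hp
  have hmono := intervalIntegral.integral_mono_on zero_le_one (small_intble hp)
    (big_intble hp hs0 hs1) (pointwise_le hp hs0 hs1)
  have hX : (0:ℝ) < p^3/(p+1)^4 := div_pos (pow_pos hp0 3) (pow_pos h1 4)
  have hL : s * p ^ 3 / (p + 1) ^ 2 * (1 / (p + 1) ^ 2 - (Real.log s) ^ 2 / p ^ 2)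
      < p^3/(p+1)^4 := by
    have e : s * p ^ 3 / (p + 1) ^ 2 * (1 / (p + 1) ^ 2 - (Real.log s) ^ 2 / p ^ 2)
        = s * (p^3/(p+1)^4) - s * p * (Real.log s)^2 / (p+1)^2 := by
      field_simp
    have h2 : (0:ℝ) ≤ s * p * (Real.log s)^2 / (p+1)^2 := by positivity
    have h3 : s * (p^3/(p+1)^4) < 1 * (p^3/(p+1)^4) :=
      mul_lt_mul_of_pos_right hs1 hX
    rw [e]
    linarith
  linarith
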